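/- Let p be a prime, G a finite p-group, k = ZMod p, kG the group algebra with Jacobson radical J, A a finite type, and φ : FreeAlgebra k A →ₐ[k] kG a surjective k-algebra homomorphism with φ(x_a) ∈ J for every generator x_a. Then for every r ≥ 0, J^r equals the k-span of {φ(w) : w a word in A of length ≥ r}; in particular the images of the words of length at least r span J^r. -/

import Mathlib

/-- The monomial in the free algebra corresponding to a word in the free monoid. -/
noncomputable def wordMonomial (k : Type*) [CommRing k] {A : Type*} (w : FreeMonoid A) :
    FreeAlgebra k A :=
  FreeMonoid.lift (FreeAlgebra.ι k) w

theorem wordMonomial_mul (k : Type*) [CommRing k] {A : Type*} (w v : FreeMonoid A) :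
    wordMonomial k (w * v) = wordMonomial k w * wordMonomial k v :=
  map_mul _ _ _

theorem span_range_wordMonomial (k : Type*) [CommRing k] (A : Type*) :
    Submodule.span k (Set.range (wordMonomial k (A := A))) = ⊤ := by
  have h1 : Set.range (wordMonomial k (A := A)) =
      (Submonoid.closure (Set.range (FreeAlgebra.ι k (X := A))) : Set (FreeAlgebra k A)) := by
    rw [← FreeMonoid.mrange_lift]
    rfl
  rw [h1, ← Algebra.adjoin_eq_span, FreeAlgebra.adjoin_range_ι]
  rfl

theorem radical_power_spanned_by_long_words
    (p : ℕ) (hp : p.Prime) (G : Type*) [Group G] [Fintype G] (hG : IsPGroup p G)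
    (A : Type*) [Finite A]
    (J : Ideal (MonoidAlgebra (ZMod p) G))
    (hJ : J = (⊥ : Ideal (MonoidAlgebra (ZMod p) G)).jacobson)
    (φ : FreeAlgebra (ZMod p) A →ₐ[ZMod p] MonoidAlgebra (ZMod p) G)
    (hsurj : Function.Surjective φ)
    (hrad : ∀ a : A, φ (FreeAlgebra.ι (ZMod p) a) ∈ J) :
    ∀ r : ℕ,
      Submodule.restrictScalars (ZMod p) (J ^ r) =
        Submodule.span (ZMod p)
          ((fun w => φ (wordMonomial (ZMod p) w)) ''
            {w : FreeMonoid A | r ≤ w.toList.length}) := by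
  haveI := hp.one_lt
  haveI : Fact p.Prime := ⟨hp⟩
  set k := ZMod p
  set R := MonoidAlgebra k G
  -- images of words land in J^(length)
  have hword : ∀ w : FreeMonoid A, φ (wordMonomial k w) ∈ J ^ w.toList.length := by
    have hlist : ∀ l : List A,
        φ (wordMonomial k (FreeMonoid.ofList l)) ∈ J ^ l.length := by
      intro l
      induction l using List.reverseRecOn with
      | nil =>
        simp only [wordMonomial, List.length_nil]
        rw [Submodule.pow_zero, Ideal.one_eq_top]
        trivial
      | append_singleton l a ih =>
        have hof : FreeMonoid.ofList (l ++ [a]) =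
            FreeMonoid.ofList l * FreeMonoid.of a := rfl
        rw [hof, wordMonomial_mul, map_mul, List.length_append, List.length_singleton,
          Submodule.pow_succ]
        have ha : φ (wordMonomial k (FreeMonoid.of a)) ∈ J := by
          simpa [wordMonomial] using hrad a
        exact Submodule.mul_mem_mul ih ha
    intro w
    simpa using hlist w.toList
  have hwordr : ∀ r : ℕ, ∀ w : FreeMonoid A, r ≤ w.toList.length →
      φ (wordMonomial k w) ∈ J ^ r := fun r w hr =>
    Ideal.pow_le_pow_right hr (hword w)
  -- the easy inclusion
  have hge : ∀ r : ℕ,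
      Submodule.span k ((fun w => φ (wordMonomial k w)) ''
        {w : FreeMonoid A | r ≤ w.toList.length}) ≤
      Submodule.restrictScalars k (J ^ r) := by
    intro r
    rw [Submodule.span_le]
    rintro x ⟨w, hw, rfl⟩
    exact hwordr r w hw
  -- J is contained in span of images of words of length ≥ 1
  have hJle : ∀ x, x ∈ J → x ∈ Submodule.span k ((fun w => φ (wordMonomial k w)) ''
      {w : FreeMonoid A | 1 ≤ w.toList.length}) := by
    intro x hx
    obtain ⟨y, rfl⟩ := hsurj x
    have hy : y ∈ Submodule.span k (Set.range (wordMonomial k (A := A))) := by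
      rw [span_range_wordMonomial]; trivial
    have hsplit : Set.range (wordMonomial k (A := A)) =
        {wordMonomial k (1 : FreeMonoid A)} ∪
          (wordMonomial k '' {w : FreeMonoid A | 1 ≤ w.toList.length}) := by
      ext z
      constructor
      · rintro ⟨w, rfl⟩
        rcases Nat.eq_zero_or_pos w.toList.length with h0 | h1
        · left
          have hnil : w.toList = [] := List.length_eq_zero_iff.mp h0
          have : w = 1 := by
            rw [← FreeMonoid.ofList_toList w, hnil]
            rfl
          simp [this]
        · right; exact ⟨w, h1, rfl⟩
      · rintro (h | ⟨w, _, rfl⟩)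
        · exact ⟨1, h.symm⟩
        · exact ⟨w, rfl⟩
    rw [hsplit, Submodule.span_union, Submodule.mem_sup] at hy
    obtain ⟨u, hu, z, hz, rfl⟩ := hy
    rw [Submodule.mem_span_singleton] at hu
    obtain ⟨c, rfl⟩ := hu
    have hmono1 : wordMonomial k (1 : FreeMonoid A) = 1 := by simp [wordMonomial]
    have hφz : φ z ∈ J := by
      have : z ∈ Submodule.span k (wordMonomial k '' {w : FreeMonoid A | 1 ≤ w.toList.length}) := hz
      have hle : Submodule.span k (wordMonomial k '' {w : FreeMonoid A | 1 ≤ w.toList.length}) ≤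
          (Submodule.restrictScalars k J).comap φ.toLinearMap := by
        rw [Submodule.span_le]
        rintro _ ⟨w, hw, rfl⟩
        have h : φ (wordMonomial k w) ∈ J :=
          Ideal.pow_le_self (Nat.one_le_iff_ne_zero.mp hw) (hword w)
        simpa using h
      have := hle this
      simpa using this
    have hc1 : φ (c • wordMonomial k 1 + z) - φ z = c • 1 := by
      rw [map_add, map_smul, hmono1, map_one]; simp
    have hcJ : (c • (1 : R)) ∈ J := by
      rw [← hc1]; exact J.sub_mem hx hφz
    have hc0 : c = 0 := by
      by_contra hc
      obtain ⟨M, hM⟩ := Ideal.exists_maximal R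
      have hJM : J ≤ M := by
        rw [hJ]
        exact sInf_le ⟨bot_le, hM⟩
      have : (c • (1 : R)) ∈ M := hJM hcJ
      have hunit : IsUnit (c • (1 : R)) := by
        have : c • (1 : R) = algebraMap k R c := by
          rw [Algebra.algebraMap_eq_smul_one]
        rw [this]
        exact (IsUnit.mk0 c hc).map (algebraMap k R)
      exact hM.ne_top (M.eq_top_of_isUnit_mem this hunit)
    rw [hc0, zero_smul, zero_add]
    have : z ∈ Submodule.span k (wordMonomial k '' {w : FreeMonoid A | 1 ≤ w.toList.length}) := hz
    -- push through φ
    have := Submodule.mem_map_of_mem (f := φ.toLinearMap) this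
    rw [Submodule.map_span] at this
    refine Submodule.span_mono ?_ this
    rintro _ ⟨_, ⟨w, hw, rfl⟩, rfl⟩
    exact ⟨w, hw, rfl⟩
  -- main induction
  intro r
  refine le_antisymm ?_ (hge r)
  induction r with
  | zero =>
    intro x _
    obtain ⟨y, rfl⟩ := hsurj x
    have hy : y ∈ Submodule.span k (Set.range (wordMonomial k (A := A))) := by
      rw [span_range_wordMonomial]; trivial
    have := Submodule.mem_map_of_mem (f := φ.toLinearMap) hy
    rw [Submodule.map_span] at this
    refine Submodule.span_mono ?_ this
    rintro _ ⟨_, ⟨w, rfl⟩, rfl⟩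
    exact ⟨w, by simp, rfl⟩
  | succ r ih =>
    intro x hx
    have hx' : x ∈ J ^ r * J := by
      have hx2 : x ∈ J ^ (r + 1) := hx
      rwa [Submodule.pow_succ] at hx2
    refine Submodule.mul_induction_on hx' ?_ ?_
    · intro a ha b hb
      have ha' : a ∈ Submodule.span k ((fun w => φ (wordMonomial k w)) ''
          {w : FreeMonoid A | r ≤ w.toList.length}) := ih ha
      have hb' := hJle b hb
      have hmul : Submodule.span k ((fun w => φ (wordMonomial k w)) ''
            {w : FreeMonoid A | r ≤ w.toList.length}) *
          Submodule.span k ((fun w => φ (wordMonomial k w)) ''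
            {w : FreeMonoid A | 1 ≤ w.toList.length}) ≤
          Submodule.span k ((fun w => φ (wordMonomial k w)) ''
            {w : FreeMonoid A | r + 1 ≤ w.toList.length}) := by
        rw [Submodule.span_mul_span, Submodule.span_le]
        rintro _ ⟨_, ⟨w1, hw1, rfl⟩, _, ⟨w2, hw2, rfl⟩, rfl⟩
        refine Submodule.subset_span ⟨w1 * w2, ?_, ?_⟩
        · simp only [Set.mem_setOf_eq] at hw1 hw2 ⊢
          rw [FreeMonoid.toList_mul, List.length_append]
          omega
        · simp [wordMonomial_mul, map_mul]
      exact hmul (Submodule.mul_mem_mul ha' hb')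
    · intro a b ha hb
      exact Submodule.add_mem _ ha hb
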